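/- Let C ⊆ ℍⁿ_κ be a closed κ-hyperbolically convex set and q ∈ ℍⁿ_κ. Then for every p ∈ C, d(p, P_C(q))² ≤ ⟨log_p q, log_p P_C(q)⟩ + ⟨log_{P_C(q)} p, log_{P_C(q)} q⟩, and consequently d(p, P_C(q))² ≤ ⟨log_p q, log_p P_C(q)⟩. In particular, d(p, P_C(q)) ≤ d(p, q) for all p ∈ C. -/

import Mathlib

noncomputable section

/-- Lorentzian inner product on ℝ^{n+1}. -/
def lip {n : ℕ} (x y : Fin (n+1) → ℝ) : ℝ :=
  (∑ i : Fin n, x i.castSucc * y i.castSucc) - x (Fin.last n) * y (Fin.last n)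

/-- Lorentzian norm (of vectors with nonnegative self-product). -/
def lnorm {n : ℕ} (x : Fin (n+1) → ℝ) : ℝ := Real.sqrt (lip x x)

/-- Euclidean dot product. -/
def edot {n : ℕ} (x y : Fin (n+1) → ℝ) : ℝ := ∑ i, x i * y i

/-- The matrix J = diag(1,…,1,−1) as a map. -/
def Jm {n : ℕ} (x : Fin (n+1) → ℝ) : Fin (n+1) → ℝ :=
  fun i => if i = Fin.last n then -(x i) else x i

/-- The κ-hyperbolic space form (hyperboloid model). -/
def Hyp {n : ℕ} (κ : ℝ) : Set (Fin (n+1) → ℝ) :=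
  {p | lip p p = -1/κ ∧ 0 < p (Fin.last n)}

/-- Inverse hyperbolic cosine. -/
def arcosh (x : ℝ) : ℝ := Real.log (x + Real.sqrt (x^2 - 1))

/-- Intrinsic distance on the κ-hyperbolic space form. -/
def dH {n : ℕ} (κ : ℝ) (p q : Fin (n+1) → ℝ) : ℝ :=
  (1 / Real.sqrt κ) * arcosh (-(κ * lip p q))

/-- Lorentzian projection onto the tangent space at p. -/
def projT {n : ℕ} (κ : ℝ) (p x : Fin (n+1) → ℝ) : Fin (n+1) → ℝ :=
  x + (κ * lip p x) • p

/-- Logarithm map of the κ-hyperbolic space form. -/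
def logH {n : ℕ} (κ : ℝ) (p q : Fin (n+1) → ℝ) : Fin (n+1) → ℝ :=
  (dH κ p q / lnorm (projT κ p q)) • projT κ p q

/-- Exponential map of the κ-hyperbolic space form. -/
def expH {n : ℕ} (κ : ℝ) (p v : Fin (n+1) → ℝ) : Fin (n+1) → ℝ :=
  Real.cosh (Real.sqrt κ * lnorm v) • p +
    (Real.sinh (Real.sqrt κ * lnorm v) / (Real.sqrt κ * lnorm v)) • v

/-- The cone spanned by a set. -/
def coneOf {n : ℕ} (C : Set (Fin (n+1) → ℝ)) : Set (Fin (n+1) → ℝ) :=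
  {x | ∃ t : ℝ, 0 ≤ t ∧ ∃ p ∈ C, x = t • p}

/-- The Lorentz cone. -/
def LorentzCone {n : ℕ} : Set (Fin (n+1) → ℝ) :=
  {x | lip x x ≤ 0 ∧ 0 ≤ x (Fin.last n)}

/-- The interior of the Lorentz cone. -/
def LorentzConeInt {n : ℕ} : Set (Fin (n+1) → ℝ) :=
  {x | lip x x < 0 ∧ 0 < x (Fin.last n)}

section Auxiliary

open Real Set

variable {n : ℕ}

lemma lip_symm (x y : Fin (n+1) → ℝ) : lip x y = lip y x := by
  simp [lip, mul_comm]

lemma lip_add_left (x y z : Fin (n+1) → ℝ) : lip (x+y) z = lip x z + lip y z := by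
  simp [lip, add_mul, Finset.sum_add_distrib]; ring

lemma lip_smul_left (s : ℝ) (x y : Fin (n+1) → ℝ) : lip (s • x) y = s * lip x y := by
  simp [lip, mul_assoc, ← Finset.mul_sum]; ring

lemma lip_add_right (x y z : Fin (n+1) → ℝ) : lip x (y+z) = lip x y + lip x z := by
  rw [lip_symm, lip_add_left, lip_symm y x, lip_symm z x]

lemma lip_smul_right (s : ℝ) (x y : Fin (n+1) → ℝ) : lip x (s • y) = s * lip x y := by
  rw [lip_symm, lip_smul_left, lip_symm]

lemma lip_sub_left (x y z : Fin (n+1) → ℝ) : lip (x-y) z = lip x z - lip y z := by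
  simp [lip, sub_mul, Finset.sum_sub_distrib]; ring

lemma lip_sub_right (x y z : Fin (n+1) → ℝ) : lip x (y-z) = lip x y - lip x z := by
  rw [lip_symm, lip_sub_left, lip_symm y x, lip_symm z x]

lemma lip_zero_right (x : Fin (n+1) → ℝ) : lip x 0 = 0 := by simp [lip]

lemma lip_zero_left (x : Fin (n+1) → ℝ) : lip 0 x = 0 := by simp [lip]

lemma arcosh_nonneg {x : ℝ} (hx : 1 ≤ x) : 0 ≤ _root_.arcosh x := by
  have := Real.sqrt_nonneg (x^2-1)
  exact Real.log_nonneg (by linarith)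

lemma exp_arcosh {x : ℝ} (hx : 1 ≤ x) : Real.exp (_root_.arcosh x) = x + Real.sqrt (x^2-1) := by
  have := Real.sqrt_nonneg (x^2-1)
  exact Real.exp_log (by linarith)

lemma exp_neg_arcosh {x : ℝ} (hx : 1 ≤ x) : Real.exp (-_root_.arcosh x) = x - Real.sqrt (x^2-1) := by
  rw [Real.exp_neg, _root_.exp_arcosh hx]
  have hs : Real.sqrt (x^2-1) ^ 2 = x^2 - 1 := Real.sq_sqrt (by nlinarith)
  exact inv_eq_of_mul_eq_one_right (by nlinarith)

lemma cosh_arcosh {x : ℝ} (hx : 1 ≤ x) : Real.cosh (_root_.arcosh x) = x := by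
  rw [Real.cosh_eq, _root_.exp_arcosh hx, _root_.exp_neg_arcosh hx]; ring

lemma sinh_arcosh {x : ℝ} (hx : 1 ≤ x) : Real.sinh (_root_.arcosh x) = Real.sqrt (x^2-1) := by
  rw [Real.sinh_eq, _root_.exp_arcosh hx, _root_.exp_neg_arcosh hx]; ring

lemma arcosh_one : _root_.arcosh 1 = 0 := by simp [_root_.arcosh]

lemma arcosh_eq_one_of {x : ℝ} (hx : 1 ≤ x) (h : _root_.arcosh x = 0) : x = 1 := by
  have := _root_.cosh_arcosh hx; rw [h, Real.cosh_zero] at this; exact this.symm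

lemma sinh_le_mul_cosh {r : ℝ} (hr : 0 ≤ r) : Real.sinh r ≤ r * Real.cosh r := by
  have mono : MonotoneOn (fun r : ℝ => r * Real.cosh r - Real.sinh r) (Ici 0) := by
    apply monotoneOn_of_deriv_nonneg (convex_Ici 0)
    · exact ((continuous_id.mul Real.continuous_cosh).sub Real.continuous_sinh).continuousOn
    · intro x hx
      exact (((hasDerivAt_id x).mul (Real.hasDerivAt_cosh x)).sub
        (Real.hasDerivAt_sinh x)).differentiableAt.differentiableWithinAt
    · intro x hx
      rw [interior_Ici] at hx
      have hd : HasDerivAt (fun r : ℝ => r * Real.cosh r - Real.sinh r)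
          (1 * Real.cosh x + x * Real.sinh x - Real.cosh x) x :=
        ((hasDerivAt_id x).mul (Real.hasDerivAt_cosh x)).sub (Real.hasDerivAt_sinh x)
      rw [hd.deriv]
      have h1 : 0 ≤ Real.sinh x := Real.sinh_nonneg_iff.2 (le_of_lt hx)
      nlinarith [le_of_lt (show (0:ℝ) < x from hx)]
  have h := mono (self_mem_Ici) (mem_Ici.2 hr) hr
  simp at h
  linarith

lemma sinh_div_mono : MonotoneOn (fun r : ℝ => Real.sinh r / (2*r)) (Ioi 0) := by
  apply monotoneOn_of_deriv_nonneg (convex_Ioi 0)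
  · apply ContinuousOn.div (Real.continuous_sinh.continuousOn)
      (continuous_const.mul continuous_id).continuousOn
    intro x hx
    have h : (0:ℝ) < x := hx
    exact mul_ne_zero two_ne_zero (ne_of_gt h)
  · intro x hx
    rw [interior_Ioi] at hx
    have h : (0:ℝ) < x := hx
    have hx0 : (2*x) ≠ 0 := mul_ne_zero two_ne_zero (ne_of_gt h)
    exact ((Real.hasDerivAt_sinh x).div ((hasDerivAt_id x).const_mul 2)
      hx0).differentiableAt.differentiableWithinAt
  · intro x hx
    rw [interior_Ioi] at hx
    have hx' : (0:ℝ) < x := hx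
    have hx0 : (2*x) ≠ 0 := mul_ne_zero two_ne_zero (ne_of_gt hx')
    have hd : HasDerivAt (fun r : ℝ => Real.sinh r / (2*r))
        ((Real.cosh x * (2*x) - Real.sinh x * (2*1)) / (2*x)^2) x :=
      (Real.hasDerivAt_sinh x).div ((hasDerivAt_id x).const_mul 2) hx0
    rw [hd.deriv]
    apply div_nonneg _ (sq_nonneg _)
    have := sinh_le_mul_cosh hx'.le
    nlinarith

lemma convexOn_cosh_sqrt : ConvexOn ℝ (Ici 0) (fun x : ℝ => Real.cosh (Real.sqrt x)) := by
  apply MonotoneOn.convexOn_of_deriv (convex_Ici 0)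
  · exact (Real.continuous_cosh.comp Real.continuous_sqrt).continuousOn
  · rw [interior_Ici]
    intro x hx
    have hx' : (0:ℝ) < x := hx
    exact ((Real.hasDerivAt_cosh (Real.sqrt x)).comp x
      (Real.hasDerivAt_sqrt hx'.ne')).differentiableAt.differentiableWithinAt
  · rw [interior_Ici]
    have hderiv : ∀ x ∈ Ioi (0:ℝ), deriv (fun x : ℝ => Real.cosh (Real.sqrt x)) x
        = Real.sinh (Real.sqrt x) / (2 * Real.sqrt x) := by
      intro x hx
      have hx' : (0:ℝ) < x := hx
      have hd : HasDerivAt (fun x : ℝ => Real.cosh (Real.sqrt x))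
          (Real.sinh (Real.sqrt x) * (1 / (2 * Real.sqrt x))) x :=
        (Real.hasDerivAt_cosh (Real.sqrt x)).comp x (Real.hasDerivAt_sqrt hx'.ne')
      rw [hd.deriv, mul_one_div]
    intro x hx y hy hxy
    rw [hderiv x hx, hderiv y hy]
    have hx' : Real.sqrt x ∈ Ioi (0:ℝ) := Real.sqrt_pos.2 hx
    have hy' : Real.sqrt y ∈ Ioi (0:ℝ) := Real.sqrt_pos.2 hy
    exact sinh_div_mono hx' hy' (Real.sqrt_le_sqrt hxy)

lemma key_ineq (α β u : ℝ) (hα : 0 ≤ α) (hβ : 0 ≤ β) (hu1 : -1 ≤ u) (hu2 : u ≤ 1) :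
    Real.cosh (Real.sqrt (α^2 + β^2 - 2*α*β*u))
      ≤ Real.cosh α * Real.cosh β - Real.sinh α * Real.sinh β * u := by
  have h1 : ((α - β)^2 : ℝ) ∈ Ici (0:ℝ) := mem_Ici.2 (sq_nonneg _)
  have h2 : ((α + β)^2 : ℝ) ∈ Ici (0:ℝ) := mem_Ici.2 (sq_nonneg _)
  have ha : (0:ℝ) ≤ (1+u)/2 := by linarith
  have hb : (0:ℝ) ≤ (1-u)/2 := by linarith
  have hab : (1+u)/2 + (1-u)/2 = (1:ℝ) := by ring
  have hcvx := convexOn_cosh_sqrt.2 h1 h2 ha hb hab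
  simp only [smul_eq_mul] at hcvx
  have e1 : (1+u)/2 * (α-β)^2 + (1-u)/2 * (α+β)^2 = α^2+β^2-2*α*β*u := by ring
  rw [e1, Real.sqrt_sq_eq_abs, Real.cosh_abs, Real.sqrt_sq (by linarith)] at hcvx
  calc Real.cosh (Real.sqrt (α^2 + β^2 - 2*α*β*u))
      ≤ (1+u)/2 * Real.cosh (α-β) + (1-u)/2 * Real.cosh (α+β) := hcvx
    _ = Real.cosh α * Real.cosh β - Real.sinh α * Real.sinh β * u := by
        rw [Real.cosh_sub, Real.cosh_add]; ring

lemma comp_ineq {α β γ u : ℝ} (hα : 0 ≤ α) (hβ : 0 ≤ β) (hγ : 0 ≤ γ) (hu1 : -1 ≤ u) (hu2 : u ≤ 1)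
    (h : Real.cosh α * Real.cosh β - Real.sinh α * Real.sinh β * u ≤ Real.cosh γ) :
    α^2 + β^2 - 2*α*β*u ≤ γ^2 := by
  have h0 : 0 ≤ α^2 + β^2 - 2*α*β*u := by nlinarith [sq_nonneg (α-β), mul_nonneg hα hβ]
  have h2 : Real.cosh (Real.sqrt (α^2+β^2-2*α*β*u)) ≤ Real.cosh γ :=
    le_trans (key_ineq α β u hα hβ hu1 hu2) h
  have h3 : Real.sqrt (α^2+β^2-2*α*β*u) ≤ γ := by
    have := Real.cosh_le_cosh.1 h2
    rwa [abs_of_nonneg (Real.sqrt_nonneg _), abs_of_nonneg hγ] at this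
  calc α^2+β^2-2*α*β*u = (Real.sqrt (α^2+β^2-2*α*β*u))^2 := (Real.sq_sqrt h0).symm
    _ ≤ γ^2 := by nlinarith [Real.sqrt_nonneg (α^2+β^2-2*α*β*u)]

lemma tangent_key {κ : ℝ} (hκ : 0 < κ) {p x : Fin (n+1) → ℝ}
    (hp : lip p p = -1/κ) (hpL : 0 < p (Fin.last n)) (hx : lip p x = 0) :
    0 ≤ lip x x ∧ (lip x x = 0 → x = 0) := by
  have hcs := Finset.sum_mul_sq_le_sq_mul_sq Finset.univ
    (fun i : Fin n => p i.castSucc) (fun i : Fin n => x i.castSucc)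
  simp_rw [pow_two] at hcs
  simp only [lip] at hp hx ⊢
  set P := ∑ i : Fin n, p i.castSucc * p i.castSucc with hP
  set X := ∑ i : Fin n, x i.castSucc * x i.castSucc with hX
  set S := ∑ i : Fin n, p i.castSucc * x i.castSucc with hS
  set pL := p (Fin.last n) with hpLd
  set xL := x (Fin.last n) with hxLd
  have hXnn : 0 ≤ X := Finset.sum_nonneg fun i _ => mul_self_nonneg _
  have h1 : κ * P - κ * (pL * pL) = -1 := by
    have h2 : κ * (P - pL*pL) = κ * (-1/κ) := by rw [hp]
    field_simp at h2; linarith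
  have hSx : S = pL * xL := by linarith
  have hS2k : κ * (S*S) = κ * ((pL*xL)*(pL*xL)) := by rw [hSx]
  have hk1 : κ * (S*S) ≤ κ * (P*X) := mul_le_mul_of_nonneg_left hcs hκ.le
  have h1' : κ * P = κ * (pL*pL) - 1 := by linarith
  have h1X : κ * (P*X) = κ*(pL*pL)*X - X := by
    calc κ * (P*X) = (κ*P)*X := by ring
      _ = (κ*(pL*pL)-1)*X := by rw [h1']
      _ = κ*(pL*pL)*X - X := by ring
  have key : X ≤ κ*(pL*pL)*(X - xL*xL) := by
    rw [h1X] at hk1; rw [hS2k] at hk1; nlinarith [hk1]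
  have hmain : 0 ≤ X - xL * xL := by
    nlinarith [key, hXnn, mul_pos hκ (mul_pos hpL hpL)]
  refine ⟨hmain, fun h0 => ?_⟩
  have hX0 : X = 0 := by
    nlinarith [key, hXnn, mul_pos hκ (mul_pos hpL hpL), h0]
  have hxL : xL = 0 := by
    have hxx : xL * xL = 0 := by linarith
    exact mul_self_eq_zero.mp hxx
  have hco : ∀ i ∈ Finset.univ, x (Fin.castSucc i) * x (Fin.castSucc i) = 0 := by
    rw [← Finset.sum_eq_zero_iff_of_nonneg (fun i _ => mul_self_nonneg _)]
    exact hX0.symm ▸ rfl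
  funext i
  refine Fin.lastCases ?_ (fun j => ?_) i
  · exact hxL
  · have := hco j (Finset.mem_univ j)
    simpa [mul_self_eq_zero] using this

lemma tangent_cs {κ : ℝ} (hκ : 0 < κ) {p u v : Fin (n+1) → ℝ}
    (hp : lip p p = -1/κ) (hpL : 0 < p (Fin.last n))
    (hu : lip p u = 0) (hv : lip p v = 0) :
    (lip u v)^2 ≤ lip u u * lip v v := by
  have hq : ∀ t : ℝ, 0 ≤ lip v v * (t * t) + (2 * lip u v) * t + lip u u := by
    intro t
    have h1 : lip p (u + t • v) = 0 := by
      rw [lip_add_right, lip_smul_right, hu, hv]; ring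
    have h2 := (tangent_key hκ hp hpL h1).1
    have h3 : lip (u + t • v) (u + t • v)
        = lip v v * (t * t) + (2 * lip u v) * t + lip u u := by
      simp only [lip_add_left, lip_add_right, lip_smul_left, lip_smul_right, lip_symm v u]
      ring
    linarith [h3 ▸ h2]
  have hd := discrim_le_zero hq
  rw [discrim] at hd
  nlinarith [hd]

lemma one_le_A {κ : ℝ} (hκ : 0 < κ) {p q : Fin (n+1) → ℝ}
    (hp : p ∈ Hyp κ) (hq : q ∈ Hyp κ) : 1 ≤ -(κ * lip p q) := by
  obtain ⟨hp1, hp2⟩ := hp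
  obtain ⟨hq1, hq2⟩ := hq
  have hcs := Finset.sum_mul_sq_le_sq_mul_sq Finset.univ
    (fun i : Fin n => p i.castSucc) (fun i : Fin n => q i.castSucc)
  simp_rw [pow_two] at hcs
  simp only [lip] at hp1 hq1 ⊢
  set P := ∑ i : Fin n, p i.castSucc * p i.castSucc with hP
  set Q := ∑ i : Fin n, q i.castSucc * q i.castSucc with hQ
  set S := ∑ i : Fin n, p i.castSucc * q i.castSucc with hS
  set pL := p (Fin.last n) with hpLd
  set qL := q (Fin.last n) with hqLd
  have hPnn : 0 ≤ P := Finset.sum_nonneg fun i _ => mul_self_nonneg _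
  have hQnn : 0 ≤ Q := Finset.sum_nonneg fun i _ => mul_self_nonneg _
  have h1 : κ * P = κ * (pL * pL) - 1 := by
    have h2 : κ * (P - pL*pL) = κ * (-1/κ) := by rw [hp1]
    field_simp at h2; linarith
  have h1q : κ * Q = κ * (qL * qL) - 1 := by
    have h2 : κ * (Q - qL*qL) = κ * (-1/κ) := by rw [hq1]
    field_simp at h2; linarith
  have hs2 : 1 ≤ κ * (pL * pL) := by nlinarith
  have hs3 : 1 ≤ κ * (qL * qL) := by nlinarith
  have h4 : 1 ≤ κ * (pL * qL) := by
    nlinarith [mul_pos (mul_pos hκ hp2) hq2, hs2, hs3]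
  have hcs2 : κ^2 * (S*S) ≤ κ^2 * (P*Q) := by nlinarith [hcs, sq_nonneg κ]
  have h7 : κ^2 * (P*Q) = (κ*(pL*pL)-1) * (κ*(qL*qL)-1) := by
    calc κ^2 * (P*Q) = (κ*P) * (κ*Q) := by ring
      _ = (κ*(pL*pL)-1) * (κ*(qL*qL)-1) := by rw [h1, h1q]
  have h5 : κ^2 * (S*S) ≤ (κ*(pL*qL) - 1)^2 := by
    nlinarith [hcs2, h7, sq_nonneg (pL - qL), hκ.le, mul_nonneg hκ.le (sq_nonneg (pL-qL))]
  nlinarith [h5, h4]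

lemma A_eq_one {κ : ℝ} (hκ : 0 < κ) {p q : Fin (n+1) → ℝ}
    (hp : p ∈ Hyp κ) (hq : q ∈ Hyp κ) (h : -(κ * lip p q) = 1) : p = q := by
  have hlpq : lip p q = -1/κ := by
    field_simp
    linarith [h]
  have hx : lip p (p - q) = 0 := by
    rw [lip_sub_right, hp.1, hlpq]; ring
  have hxx : lip (p-q) (p-q) = 0 := by
    rw [lip_sub_left, lip_sub_right, lip_sub_right, hp.1, hq.1, hlpq, lip_symm q p, hlpq]
    ring
  have := (tangent_key hκ hp.1 hp.2 hx).2 hxx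
  exact sub_eq_zero.mp this

lemma lip_projT_projT {κ : ℝ} (hκ : κ ≠ 0) (p x y : Fin (n+1) → ℝ)
    (hp : lip p p = -1/κ) :
    lip (projT κ p x) (projT κ p y) = lip x y + κ * (lip p x * lip p y) := by
  simp only [projT]
  rw [lip_add_left, lip_smul_left, lip_add_right, lip_add_right, lip_smul_right,
    lip_smul_right, lip_symm p x, hp]
  field_simp
  ring

lemma lip_p_projT {κ : ℝ} (hκ : κ ≠ 0) (p x : Fin (n+1) → ℝ)
    (hp : lip p p = -1/κ) : lip p (projT κ p x) = 0 := by
  simp only [projT]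
  rw [lip_add_right, lip_smul_right, hp]
  field_simp
  ring

lemma projT_self {κ : ℝ} (hκ : κ ≠ 0) (p : Fin (n+1) → ℝ) (hp : lip p p = -1/κ) :
    projT κ p p = 0 := by
  simp only [projT, hp]
  have h2 : κ * (-1/κ) = -1 := by field_simp
  rw [h2, neg_one_smul]
  exact add_neg_cancel p

lemma lip_logH (κ : ℝ) (p x y : Fin (n+1) → ℝ) :
    lip (logH κ p x) (logH κ p y)
      = (dH κ p x / lnorm (projT κ p x)) *
        ((dH κ p y / lnorm (projT κ p y)) * lip (projT κ p x) (projT κ p y)) := by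
  simp only [logH, lip_smul_left, lip_smul_right]
  ring

lemma sq1le {x : ℝ} (h : 1 ≤ x) : (0:ℝ) ≤ x^2-1 := by nlinarith

lemma sq1lt {x : ℝ} (h : 1 < x) : (0:ℝ) < x^2-1 := by nlinarith

lemma nonpos_of_mul_le {t x : ℝ} (ht : 0 < t) (h : t * x ≤ 0) : x ≤ 0 := by nlinarith

lemma le_of_sq_le_mul {x y : ℝ} (h : x^2 ≤ y*x) (hx : 0 < x) : x ≤ y := by nlinarith

end Auxiliary


set_option maxHeartbeats 2000000 in
/-- Properties of the intrinsic κ-projection onto a closed κ-hyperbolically convex set: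
for every p ∈ C, d(p,P_C(q))² ≤ ⟨log_p q, log_p P_C(q)⟩ + ⟨log_{P_C(q)} p, log_{P_C(q)} q⟩,
hence d(p,P_C(q))² ≤ ⟨log_p q, log_p P_C(q)⟩, and d(p,P_C(q)) ≤ d(p,q). -/

theorem intrinsic_projection_inequalities {n : ℕ} (κ : ℝ) (hκ : 0 < κ)
    (C : Set (Fin (n+1) → ℝ)) (hC : C ⊆ Hyp κ) (hCc : IsClosed C)
    (hconv : Convex ℝ (coneOf C)) (q : Fin (n+1) → ℝ) (hq : q ∈ Hyp κ)
    (Pq : Fin (n+1) → ℝ) (hPmem : Pq ∈ C)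
    (hPmin : ∀ y ∈ C, dH κ q Pq ≤ dH κ q y)
    (hPvar : ∀ y ∈ C, lip (logH κ Pq q) (logH κ Pq y) ≤ 0) :
    ∀ p ∈ C,
      (dH κ p Pq ^ 2 ≤ lip (logH κ p q) (logH κ p Pq) + lip (logH κ Pq p) (logH κ Pq q)) ∧
      (dH κ p Pq ^ 2 ≤ lip (logH κ p q) (logH κ p Pq)) ∧
      dH κ p Pq ≤ dH κ p q := by
  intro p hp
  have hpH := hC hp
  have hPqH := hC hPmem
  have hκ0 : κ ≠ 0 := ne_of_gt hκ
  have hκs : (0:ℝ) < Real.sqrt κ := Real.sqrt_pos.2 hκ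
  have hsqh : ∀ t : ℝ, (1/Real.sqrt κ * t)^2 = t^2/κ := by
    intro t
    rw [mul_pow, one_div, inv_pow, Real.sq_sqrt hκ.le]
    ring
  set a := -(κ * lip p q) with ha
  set b := -(κ * lip p Pq) with hb
  set c := -(κ * lip q Pq) with hc
  have ha1 : 1 ≤ a := one_le_A hκ hpH hq
  have hb1 : 1 ≤ b := one_le_A hκ hpH hPqH
  have hc1 : 1 ≤ c := one_le_A hκ hq hPqH
  clear_value a b c
  set α := arcosh a with hαd
  set β := arcosh b with hβd
  set γ := arcosh c with hγd
  have hα0 : 0 ≤ α := arcosh_nonneg ha1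
  have hβ0 : 0 ≤ β := arcosh_nonneg hb1
  have hγ0 : 0 ≤ γ := arcosh_nonneg hc1
  clear_value α β γ
  have hdpq : dH κ p q = 1/Real.sqrt κ * α := by
    simp only [dH]; rw [← ha, ← hαd]
  have hdppq : dH κ p Pq = 1/Real.sqrt κ * β := by
    simp only [dH]; rw [← hb, ← hβd]
  have hdqPq : dH κ q Pq = 1/Real.sqrt κ * γ := by
    simp only [dH]; rw [← hc, ← hγd]
  have hdPqq : dH κ Pq q = 1/Real.sqrt κ * γ := by
    simp only [dH]; rw [lip_symm Pq q, ← hc, ← hγd]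
  have hdPqp : dH κ Pq p = 1/Real.sqrt κ * β := by
    simp only [dH]; rw [lip_symm Pq p, ← hb, ← hβd]
  have hT2 : lip (logH κ Pq p) (logH κ Pq q) ≤ 0 := by
    rw [lip_symm]; exact hPvar p hp
  have hdppq0 : 0 ≤ dH κ p Pq := by
    rw [hdppq]; exact mul_nonneg (by positivity) hβ0
  have hdpq0 : 0 ≤ dH κ p q := by
    rw [hdpq]; exact mul_nonneg (by positivity) hα0
  by_cases hbeq : b = 1
  · -- degenerate case p = Pq
    have hpPq : p = Pq := A_eq_one hκ hpH hPqH (by rw [← hb]; exact hbeq)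
    have hproj : projT κ p Pq = 0 := by
      rw [← hpPq]; exact projT_self hκ0 p hpH.1
    have hproj2 : projT κ Pq p = 0 := by
      rw [← hpPq]; exact projT_self hκ0 p hpH.1
    have hlog1 : logH κ p Pq = 0 := by simp only [logH]; rw [hproj, smul_zero]
    have hlog2 : logH κ Pq p = 0 := by simp only [logH]; rw [hproj2, smul_zero]
    have hL : dH κ p Pq = 0 := by
      rw [hdppq, hβd, hbeq, arcosh_one, mul_zero]
    refine ⟨?_, ?_, ?_⟩
    · rw [hL, hlog1, hlog2, lip_zero_right, lip_zero_left]; norm_num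
    · rw [hL, hlog1, lip_zero_right]; norm_num
    · rw [hL]; exact hdpq0
  · have hb1' : 1 < b := lt_of_le_of_ne hb1 (Ne.symm hbeq)
    have ha1' : 1 < a := by
      rcases eq_or_lt_of_le ha1 with haeq | h
      · exfalso
        have hpq : p = q := A_eq_one hκ hpH hq (by rw [← ha]; exact haeq.symm)
        have h0 : dH κ q Pq ≤ dH κ q p := hPmin p hp
        have hqp1 : dH κ q p = 0 := by
          simp only [dH]
          have hl : lip q p = -1/κ := by rw [lip_symm, hpq, hq.1]
          rw [hl]
          have h2 : -(κ * (-1/κ)) = 1 := by field_simp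
          rw [h2, arcosh_one, mul_zero]
        have hγle : γ ≤ 0 := by
          rw [hdqPq, hqp1] at h0
          have hpos : 0 < 1/Real.sqrt κ := by positivity
          exact nonpos_of_mul_le hpos h0
        have hγz : γ = 0 := le_antisymm hγle hγ0
        have hcone : c = 1 := arcosh_eq_one_of hc1 (by rw [← hγd]; exact hγz)
        have hqPq : q = Pq := A_eq_one hκ hq hPqH (by rw [← hc]; exact hcone)
        apply hbeq
        rw [hb, ← hqPq, hpq, hq.1]
        field_simp
      · exact h
    have hlpq : lip p q = -(a/κ) := by rw [ha]; field_simp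
    have hlpPq : lip p Pq = -(b/κ) := by rw [hb]; field_simp
    have hlqPq : lip q Pq = -(c/κ) := by rw [hc]; field_simp
    set sa := Real.sqrt (a^2-1) with hsad
    set sb := Real.sqrt (b^2-1) with hsbd
    clear_value sa sb
    have hsa2 : sa^2 = a^2-1 := by rw [hsad]; exact Real.sq_sqrt (sq1le ha1)
    have hsb2 : sb^2 = b^2-1 := by rw [hsbd]; exact Real.sq_sqrt (sq1le hb1)
    have hsa : 0 < sa := by rw [hsad]; exact Real.sqrt_pos.2 (sq1lt ha1')
    have hsb : 0 < sb := by rw [hsbd]; exact Real.sqrt_pos.2 (sq1lt hb1')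
    have huu : lip (projT κ p q) (projT κ p q) = (a^2-1)/κ := by
      rw [lip_projT_projT hκ0 p q q hpH.1, hq.1, hlpq]
      field_simp; ring
    have hvv : lip (projT κ p Pq) (projT κ p Pq) = (b^2-1)/κ := by
      rw [lip_projT_projT hκ0 p Pq Pq hpH.1, hPqH.1, hlpPq]
      field_simp; ring
    have huv : lip (projT κ p q) (projT κ p Pq) = (a*b-c)/κ := by
      rw [lip_projT_projT hκ0 p q Pq hpH.1, hlqPq, hlpq, hlpPq]
      field_simp; ring
    have hlnu : lnorm (projT κ p q) = sa / Real.sqrt κ := by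
      simp only [lnorm]
      rw [huu, Real.sqrt_div (sq1le ha1) κ, ← hsad]
    have hlnv : lnorm (projT κ p Pq) = sb / Real.sqrt κ := by
      simp only [lnorm]
      rw [hvv, Real.sqrt_div (sq1le hb1) κ, ← hsbd]
    have e1 : dH κ p q / lnorm (projT κ p q) = α / sa := by
      rw [hdpq, hlnu]
      field_simp
    have e2 : dH κ p Pq / lnorm (projT κ p Pq) = β / sb := by
      rw [hdppq, hlnv]
      field_simp
    have hcsp := tangent_cs hκ hpH.1 hpH.2 (lip_p_projT hκ0 p q hpH.1)
      (lip_p_projT hκ0 p Pq hpH.1)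
    rw [huv, huu, hvv] at hcsp
    have hcs1 : (a*b-c)^2 ≤ (a^2-1)*(b^2-1) := by
      have hκ2 : (0:ℝ) < κ^2 := by positivity
      calc (a*b-c)^2 = ((a*b-c)/κ)^2 * κ^2 := by rw [div_pow, div_mul_cancel₀ _ (pow_ne_zero 2 hκ0)]
        _ ≤ ((a^2-1)/κ * ((b^2-1)/κ)) * κ^2 := mul_le_mul_of_nonneg_right hcsp hκ2.le
        _ = (a^2-1)*(b^2-1) := by rw [div_mul_div_comm, pow_two κ, div_mul_cancel₀ _ (mul_ne_zero hκ0 hκ0)]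
    have habs1 : |a*b-c| ≤ sa * sb := by
      have h1 : (a*b-c)^2 ≤ (sa*sb)^2 := by rw [mul_pow, hsa2, hsb2]; exact hcs1
      have h2 := Real.sqrt_le_sqrt h1
      rwa [Real.sqrt_sq_eq_abs, Real.sqrt_sq (by positivity)] at h2
    have hsasb : 0 < sa * sb := mul_pos hsa hsb
    have hu0r : (a*b-c)/(sa*sb) ≤ 1 := by
      rw [div_le_one hsasb]
      have := (abs_le.1 habs1).2
      linarith
    have hu0l : -1 ≤ (a*b-c)/(sa*sb) := by
      rw [le_div_iff₀ hsasb]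
      have := (abs_le.1 habs1).1
      linarith
    have hca : Real.cosh α = a := by rw [hαd]; exact cosh_arcosh ha1
    have hcb : Real.cosh β = b := by rw [hβd]; exact cosh_arcosh hb1
    have hcc : Real.cosh γ = c := by rw [hγd]; exact cosh_arcosh hc1
    have hsha : Real.sinh α = sa := by
      rw [hαd, sinh_arcosh ha1]; exact hsad.symm
    have hshb : Real.sinh β = sb := by
      rw [hβd, sinh_arcosh hb1]; exact hsbd.symm
    by_cases hceq : c = 1
    · -- degenerate case q = Pq
      have hqPq : q = Pq := A_eq_one hκ hq hPqH (by rw [← hc]; exact hceq)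
      have hba : b = a := by rw [hb, ← hqPq, ← ha]
      have hβα : β = α := by rw [hβd, hba, ← hαd]
      have hdPqq0 : dH κ Pq q = 0 := by rw [hdPqq, hγd, hceq, arcosh_one, mul_zero]
      have hlogPqq : logH κ Pq q = 0 := by
        simp only [logH]; rw [hdPqq0, zero_div, zero_smul]
      have hT2z : lip (logH κ Pq p) (logH κ Pq q) = 0 := by
        rw [hlogPqq, lip_zero_right]
      have hT1v : lip (logH κ p q) (logH κ p Pq) = α^2/κ := by
        rw [show logH κ p Pq = logH κ p q by rw [← hqPq], lip_logH, e1, huu]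
        have h9 : a^2 - 1 = sa*sa := by rw [← hsa2]; ring
        rw [h9]
        field_simp
      refine ⟨?_, ?_, ?_⟩
      · rw [hdppq, hsqh, hT1v, hT2z, hβα]
        norm_num
      · rw [hdppq, hsqh, hT1v, hβα]
      · rw [← hqPq]
    · have hc1' : 1 < c := lt_of_le_of_ne hc1 (Ne.symm hceq)
      set sc := Real.sqrt (c^2-1) with hscd
      clear_value sc
      have hsc2 : sc^2 = c^2-1 := by rw [hscd]; exact Real.sq_sqrt (sq1le hc1)
      have hsc : 0 < sc := by rw [hscd]; exact Real.sqrt_pos.2 (sq1lt hc1')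
      have hlPqp : lip Pq p = -(b/κ) := by rw [lip_symm]; exact hlpPq
      have hlPqq : lip Pq q = -(c/κ) := by rw [lip_symm]; exact hlqPq
      have hu'u' : lip (projT κ Pq p) (projT κ Pq p) = (b^2-1)/κ := by
        rw [lip_projT_projT hκ0 Pq p p hPqH.1, hpH.1, hlPqp]
        field_simp; ring
      have hv'v' : lip (projT κ Pq q) (projT κ Pq q) = (c^2-1)/κ := by
        rw [lip_projT_projT hκ0 Pq q q hPqH.1, hq.1, hlPqq]
        field_simp; ring
      have hu'v' : lip (projT κ Pq p) (projT κ Pq q) = (b*c-a)/κ := by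
        rw [lip_projT_projT hκ0 Pq p q hPqH.1, hlpq, hlPqp, hlPqq]
        field_simp; ring
      have hlnu' : lnorm (projT κ Pq p) = sb / Real.sqrt κ := by
        simp only [lnorm]
        rw [hu'u', Real.sqrt_div (sq1le hb1) κ, ← hsbd]
      have hlnv' : lnorm (projT κ Pq q) = sc / Real.sqrt κ := by
        simp only [lnorm]
        rw [hv'v', Real.sqrt_div (sq1le hc1) κ, ← hscd]
      have e3 : dH κ Pq p / lnorm (projT κ Pq p) = β / sb := by
        rw [hdPqp, hlnu']
        field_simp
      have e4 : dH κ Pq q / lnorm (projT κ Pq q) = γ / sc := by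
        rw [hdPqq, hlnv']
        field_simp
      have hcsp' := tangent_cs hκ hPqH.1 hPqH.2 (lip_p_projT hκ0 Pq p hPqH.1)
        (lip_p_projT hκ0 Pq q hPqH.1)
      rw [hu'v', hu'u', hv'v'] at hcsp'
      have hcs2 : (b*c-a)^2 ≤ (b^2-1)*(c^2-1) := by
        have hκ2 : (0:ℝ) < κ^2 := by positivity
        calc (b*c-a)^2 = ((b*c-a)/κ)^2 * κ^2 := by rw [div_pow, div_mul_cancel₀ _ (pow_ne_zero 2 hκ0)]
          _ ≤ ((b^2-1)/κ * ((c^2-1)/κ)) * κ^2 := mul_le_mul_of_nonneg_right hcsp' hκ2.le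
          _ = (b^2-1)*(c^2-1) := by rw [div_mul_div_comm, pow_two κ, div_mul_cancel₀ _ (mul_ne_zero hκ0 hκ0)]
      have habs2 : |b*c-a| ≤ sb * sc := by
        have h1 : (b*c-a)^2 ≤ (sb*sc)^2 := by rw [mul_pow, hsb2, hsc2]; exact hcs2
        have h2 := Real.sqrt_le_sqrt h1
        rwa [Real.sqrt_sq_eq_abs, Real.sqrt_sq (by positivity)] at h2
      have hsbsc : 0 < sb * sc := mul_pos hsb hsc
      have hv0r : (b*c-a)/(sb*sc) ≤ 1 := by
        rw [div_le_one hsbsc]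
        have := (abs_le.1 habs2).2
        linarith
      have hv0l : -1 ≤ (b*c-a)/(sb*sc) := by
        rw [le_div_iff₀ hsbsc]
        have := (abs_le.1 habs2).1
        linarith
      have hshg : Real.sinh γ = sc := by
        rw [hγd, sinh_arcosh hc1]; exact hscd.symm
      have comp1 : α^2 + β^2 - 2*α*β*((a*b-c)/(sa*sb)) ≤ γ^2 := by
        apply comp_ineq hα0 hβ0 hγ0 hu0l hu0r
        rw [hca, hcb, hcc, hsha, hshb]
        have heq : sa * sb * ((a*b-c)/(sa*sb)) = a*b-c := by field_simp
        linarith [heq]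
      have comp2 : γ^2 + β^2 - 2*γ*β*((b*c-a)/(sb*sc)) ≤ α^2 := by
        apply comp_ineq hγ0 hβ0 hα0 hv0l hv0r
        rw [hca, hcb, hcc, hshg, hshb]
        have heq : sc * sb * ((b*c-a)/(sb*sc)) = b*c-a := by field_simp
        linarith [heq]
      have core : β^2 ≤ α*β*((a*b-c)/(sa*sb)) + γ*β*((b*c-a)/(sb*sc)) := by
        linarith [comp1, comp2]
      have hT1v : lip (logH κ p q) (logH κ p Pq) = α*β*((a*b-c)/(sa*sb))/κ := by
        rw [lip_logH, e1, e2, huv]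
        field_simp
      have hT2v : lip (logH κ Pq p) (logH κ Pq q) = γ*β*((b*c-a)/(sb*sc))/κ := by
        rw [lip_logH, e3, e4, hu'v']
        field_simp
      have hg1 : dH κ p Pq ^ 2
          ≤ lip (logH κ p q) (logH κ p Pq) + lip (logH κ Pq p) (logH κ Pq q) := by
        rw [hdppq, hsqh, hT1v, hT2v, ← add_div]
        exact (div_le_div_iff_of_pos_right hκ).2 core
      have hg2 : dH κ p Pq ^ 2 ≤ lip (logH κ p q) (logH κ p Pq) := by
        have hT2x : γ*β*((b*c-a)/(sb*sc)) ≤ 0 := by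
          have h := hT2
          rw [hT2v] at h
          have h2 := mul_le_mul_of_nonneg_right h hκ.le
          rw [div_mul_cancel₀ _ hκ0, zero_mul] at h2
          exact h2
        rw [hdppq, hsqh, hT1v]
        exact (div_le_div_iff_of_pos_right hκ).2 (by linarith)
      have hT1le : lip (logH κ p q) (logH κ p Pq) ≤ dH κ p q * dH κ p Pq := by
        have hr : (1/Real.sqrt κ*α)*(1/Real.sqrt κ*β) = α*β/κ :=
          calc (1/Real.sqrt κ*α)*(1/Real.sqrt κ*β)
              = (Real.sqrt κ * Real.sqrt κ)⁻¹*(α*β) := by rw [mul_inv]; ring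
            _ = α*β/κ := by rw [Real.mul_self_sqrt hκ.le]; ring
        rw [hT1v, hdpq, hdppq, hr]
        apply (div_le_div_iff_of_pos_right hκ).2
        exact mul_le_of_le_one_right (mul_nonneg hα0 hβ0) hu0r
      refine ⟨hg1, hg2, ?_⟩
      have hcomb : dH κ p Pq ^ 2 ≤ dH κ p q * dH κ p Pq := le_trans hg2 hT1le
      rcases eq_or_lt_of_le hdppq0 with heq | hlt
      · rw [← heq]; exact hdpq0
      · exact le_of_sq_le_mul hcomb hlt
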